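/- For each n ∈ ℕ let F_n = {σⁿ₁, …, σⁿ_{k_n}} be a finite family of pairwise distinct branches of 𝒯, where the families (F_n) are pairwise disjoint and (k_n) is strictly increasing to ∞. Then there exist an infinite set M ⊆ ℕ and natural numbers (l_m)_{m∈M} such that: for all m < m₁ < m₂ in M and every k ≤ k_m, the final segments σ^{m₁}_{k,>l_{m₁}} and σ^{m₂}_{k,>l_{m₂}} are incomparable. -/

import Mathlib

open Set Filter Topology

/-- `k` is an immediate successor of `n` in the order `le`. -/
def ImmSucc (le : ℕ → ℕ → Prop) (n k : ℕ) : Prop :=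
  le n k ∧ n ≠ k ∧ ∀ m, le n m → le m k → m = n ∨ m = k

/-- The tree `𝒯`: a partial order on `ℕ` compatible with the usual order, in which the set of
strict predecessors of every element is finite and linearly ordered, and every element has
infinitely many immediate successors. -/
structure IsJTTree (le : ℕ → ℕ → Prop) : Prop where
  refl : ∀ n, le n n
  antisymm : ∀ {m n}, le m n → le n m → m = n
  trans : ∀ {a b c}, le a b → le b c → le a c
  compat : ∀ {m n}, le m n → m ≤ n
  pred_finite : ∀ n, {m | le m n ∧ m ≠ n}.Finite
  pred_linear : ∀ n a b, le a n → le b n → le a b ∨ le b a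
  succ_infinite : ∀ n, {k | ImmSucc le n k}.Infinite

/-- A segment of the tree: a nonempty set of the form `{k : m ⪯ k ∧ k ⪯ n}`. -/
def IsSegment (le : ℕ → ℕ → Prop) (s : Set ℕ) : Prop :=
  ∃ m n, le m n ∧ s = {k | le m k ∧ le k n}

/-- A branch: a maximal linearly ordered subset of `ℕ`. -/
def IsBranch (le : ℕ → ℕ → Prop) (σ : Set ℕ) : Prop :=
  IsChain le σ ∧ ∀ τ, IsChain le τ → σ ⊆ τ → σ = τ

/-- `‖x‖_s = (∑_{i ∈ s} x(i)²)^(1/2)`. -/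
noncomputable def segNorm (x : ℕ → ℝ) (s : Set ℕ) : ℝ :=
  Real.sqrt (∑' i, s.indicator (fun j => (x j) ^ 2) i)

/-- The `JT_{2,p}` norm on finitely supported sequences:
`‖x‖ = sup {(∑_k ‖x‖_{s_k}^p)^(1/p) : s₁,…,s_n pairwise disjoint segments}`. -/
noncomputable def jtNorm (le : ℕ → ℕ → Prop) (p : ℝ) (x : ℕ → ℝ) : ℝ :=
  sSup { r : ℝ | ∃ (n : ℕ) (s : Fin n → Set ℕ),
    (∀ k, IsSegment le (s k)) ∧
    (∀ k l, k ≠ l → Disjoint (s k) (s l)) ∧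
    r = (∑ k : Fin n, segNorm x (s k) ^ p) ^ (1 / p) }

/-- A block sequence of finitely supported vectors. -/
def IsBlockSeq (x : ℕ → ℕ → ℝ) : Prop :=
  (∀ n, (Function.support (x n)).Finite) ∧
  ∀ n i j, x n i ≠ 0 → x (n + 1) j ≠ 0 → i < j

/-- The final segment `σ_{>l} = {k ∈ σ : k > l}`. -/
def finalSeg (σ : Set ℕ) (l : ℕ) : Set ℕ := {k ∈ σ | l < k}

/-- Two final segments are incomparable when their least elements are `le`-incomparable. -/
def IncompFinal (le : ℕ → ℕ → Prop) (A B : Set ℕ) : Prop :=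
  A.Nonempty ∧ B.Nonempty ∧ ¬ le (sInf A) (sInf B) ∧ ¬ le (sInf B) (sInf A)

section AuxJT

variable {le : ℕ → ℕ → Prop}

/-- A branch is downward closed. -/
lemma branch_mem_of_le (hT : IsJTTree le) {x : Set ℕ} (hx : IsBranch le x) {a b : ℕ}
    (hb : b ∈ x) (hab : le a b) : a ∈ x := by
  have hch : IsChain le (insert a x) := by
    refine hx.1.insert fun d hd hne => ?_
    rcases eq_or_ne d b with rfl | hdb
    · exact Or.inl hab
    · rcases hx.1 hd hb hdb with h | h
      · exact hT.pred_linear b a d hab h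
      · exact Or.inl (hT.trans hab h)
  have heq := hx.2 (insert a x) hch (Set.subset_insert a x)
  rw [heq]; exact Set.mem_insert a x

/-- A branch is infinite. -/
lemma branch_infinite (hT : IsJTTree le) {x : Set ℕ} (hx : IsBranch le x) : x.Infinite := by
  have hne : x.Nonempty := by
    rcases x.eq_empty_or_nonempty with h | h
    · exfalso
      have h0 : IsChain le {0} := Set.subsingleton_singleton.isChain
      have h1 := hx.2 {0} h0 (by simp [h])
      rw [h] at h1
      exact (Set.singleton_ne_empty (0 : ℕ)) h1.symm
    · exact h
  intro hfin
  obtain ⟨n, hn, hmax0⟩ := Set.Finite.exists_maximalFor id x hfin hne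
  have hmax : ∀ p ∈ x, n ≤ p → n = p := fun p hp h => le_antisymm h (hmax0 hp h)
  have htop : ∀ p ∈ x, le p n := by
    intro p hp
    rcases eq_or_ne p n with rfl | hne'
    · exact hT.refl p
    · rcases hx.1 hp hn hne' with h | h
      · exact h
      · have h2 : n = p := hmax p hp (hT.compat h)
        subst h2; exact hT.refl n
  obtain ⟨k, hk⟩ := (hT.succ_infinite n).nonempty
  have hch : IsChain le (insert k x) := by
    refine hx.1.insert fun d hd _ => ?_
    exact Or.inr (hT.trans (htop d hd) hk.1)
  have heq := hx.2 (insert k x) hch (Set.subset_insert k x)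
  have hkx : k ∈ x := by rw [heq]; exact Set.mem_insert k x
  exact hk.2.1 (hT.antisymm hk.1 (htop k hkx))

/-- Two distinct branches have finite intersection. -/
lemma branch_inter_finite (hT : IsJTTree le) {x y : Set ℕ} (hx : IsBranch le x)
    (hy : IsBranch le y) (hxy : x ≠ y) : (x ∩ y).Finite := by
  have hsub : ¬ x ⊆ y := fun h => hxy (hx.2 y hy.1 h)
  obtain ⟨s, hs, hs'⟩ := Set.not_subset.1 hsub
  refine ((hT.pred_finite s).insert s).subset ?_
  rintro c ⟨hcx, hcy⟩
  rcases eq_or_ne c s with rfl | hne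
  · exact Set.mem_insert _ _
  · rcases hx.1 hcx hs hne with h | h
    · exact Set.mem_insert_of_mem _ ⟨h, hne⟩
    · exact absurd (branch_mem_of_le hT hy hcy h) hs'

/-- Recursive choice of a sequence with an invariant and a step relation. -/
lemma exists_nat_seq' {α : Type*} (Q : ℕ → α → Prop) (St : α → α → Prop) (a0 : α) (h0 : Q 0 a0)
    (hstep : ∀ i a, Q i a → ∃ b, Q (i+1) b ∧ St a b) :
    ∃ g : ℕ → α, g 0 = a0 ∧ (∀ i, Q i (g i)) ∧ ∀ i, St (g i) (g (i+1)) := by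
  have hstep' : ∀ p : {q : ℕ × α // Q q.1 q.2}, ∃ b, Q (p.1.1 + 1) b ∧ St p.1.2 b :=
    fun p => hstep p.1.1 p.1.2 p.2
  let next : {q : ℕ × α // Q q.1 q.2} → {q : ℕ × α // Q q.1 q.2} :=
    fun p => ⟨(p.1.1 + 1, (hstep' p).choose), (hstep' p).choose_spec.1⟩
  let g : ℕ → {q : ℕ × α // Q q.1 q.2} := fun i => next^[i] ⟨(0, a0), h0⟩
  have hsucc : ∀ i, g (i+1) = next (g i) := fun i => Function.iterate_succ_apply' _ _ _
  have hidx : ∀ i, (g i).1.1 = i := by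
    intro i
    induction i with
    | zero => rfl
    | succ n ih => rw [hsucc n]; show (g n).1.1 + 1 = n + 1; rw [ih]
  refine ⟨fun i => (g i).1.2, rfl, fun i => ?_, fun i => ?_⟩
  · have := (g i).2; rwa [hidx i] at this
  · show St ((g i).1.2) ((g (i+1)).1.2)
    rw [hsucc i]
    exact (hstep' (g i)).choose_spec.2

/-- From an infinite family of pairwise distinct branches one can extract an infinite
subfamily such that each member has bounded intersection with all other members. -/
lemma branch_extract (hT : IsJTTree le) (τ : ℕ → Set ℕ) (R : Set ℕ) (hR : R.Infinite)
    (hbr : ∀ r ∈ R, IsBranch le (τ r))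
    (hne : ∀ r ∈ R, ∀ r' ∈ R, r ≠ r' → τ r ≠ τ r') :
    ∃ R', R' ⊆ R ∧ R'.Infinite ∧
      ∀ r ∈ R', ∃ N, ∀ r' ∈ R', r' ≠ r → τ r ∩ τ r' ⊆ Set.Iic N := by
  classical
  let f : ℕ → Set ℕ := fun a =>
    Nat.rec R (fun a s => if ({r ∈ s | a ∈ τ r}).Infinite then {r ∈ s | a ∈ τ r}
      else {r ∈ s | a ∉ τ r}) a
  have hf0 : f 0 = R := rfl
  have hfs : ∀ a, f (a+1) = if ({r ∈ f a | a ∈ τ r}).Infinite then {r ∈ f a | a ∈ τ r}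
      else {r ∈ f a | a ∉ τ r} := fun a => rfl
  have hfsub : ∀ a, f (a+1) ⊆ f a := by
    intro a; rw [hfs a]; split <;> exact Set.sep_subset _ _
  have hfinf : ∀ a, (f a).Infinite := by
    intro a
    induction a with
    | zero => exact hR
    | succ n ih =>
      rw [hfs n]
      by_cases h : ({r ∈ f n | n ∈ τ r}).Infinite
      · rw [if_pos h]; exact h
      · rw [if_neg h]
        exact (ih.diff (Set.not_infinite.1 h)).mono
          (fun r hr => ⟨hr.1, fun hm => hr.2 ⟨hr.1, hm⟩⟩)
  have hmono : Antitone f := antitone_nat_of_succ_le hfsub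
  have hdich : ∀ a, (∀ r ∈ f (a+1), a ∈ τ r) ∨ (∀ r ∈ f (a+1), a ∉ τ r) := by
    intro a; rw [hfs a]; split
    · exact Or.inl fun r hr => hr.2
    · exact Or.inr fun r hr => hr.2
  let β : Set ℕ := {a | ∀ r ∈ f (a+1), a ∈ τ r}
  have hβ : ∀ a r, r ∈ f (a+1) → (a ∈ τ r ↔ a ∈ β) := by
    intro a r hr
    rcases hdich a with h | h
    · exact ⟨fun _ => h, fun hb => hb r hr⟩
    · exact ⟨fun ha => absurd ha (h r hr), fun hb => hb r hr⟩
  have hβchain : IsChain le β := by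
    intro a ha b hb hab
    obtain ⟨r, hr⟩ := (hfinf (max a b + 1)).nonempty
    have hra : r ∈ f (a+1) := hmono (show a + 1 ≤ max a b + 1 by omega) hr
    have hrb : r ∈ f (b+1) := hmono (show b + 1 ≤ max a b + 1 by omega) hr
    have h1 : a ∈ τ r := (hβ a r hra).2 ha
    have h2 : b ∈ τ r := (hβ b r hrb).2 hb
    have hrR : r ∈ R := by
      have := hmono (Nat.zero_le (max a b + 1)) hr
      rwa [hf0] at this
    exact (hbr r hrR).1 h1 h2 hab
  obtain ⟨d, hd0, hdmem, hdlt⟩ := exists_nat_seq' (fun n x => x ∈ f n) (· < ·)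
      ((hfinf 0).nonempty.choose) ((hfinf 0).nonempty.choose_spec)
      (fun i x _ => by
        obtain ⟨y, hy, hxy⟩ := (hfinf (i+1)).exists_gt x
        exact ⟨y, hy, hxy⟩)
  have hdmono : StrictMono d := strictMono_nat_of_lt_succ hdlt
  have hdR : ∀ n, d n ∈ R := fun n => hf0 ▸ hmono (Nat.zero_le n) (hdmem n)
  have hBadss : (Set.range d ∩ {r | τ r ⊆ β}).Subsingleton := by
    rintro r ⟨⟨n, rfl⟩, hr⟩ r' ⟨⟨n', rfl⟩, hr'⟩
    by_contra hne''
    have h1 : τ (d n) = β := (hbr _ (hdR n)).2 β hβchain hr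
    have h2 : τ (d n') = β := (hbr _ (hdR n')).2 β hβchain hr'
    exact hne _ (hdR n) _ (hdR n') hne'' (h1.trans h2.symm)
  refine ⟨Set.range d \ {r | τ r ⊆ β}, ?_, ?_, ?_⟩
  · rintro r ⟨⟨n, rfl⟩, -⟩; exact hdR n
  · refine ((Set.infinite_range_of_injective hdmono.injective).diff hBadss.finite).mono ?_
    rintro r ⟨hr1, hr2⟩
    exact ⟨hr1, fun hb => hr2 ⟨hr1, hb⟩⟩
  · rintro r ⟨⟨n, rfl⟩, hrBad⟩
    by_contra hcon
    push_neg at hcon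
    apply hrBad
    intro a ha
    show a ∈ β
    have hSinf : {r' ∈ Set.range d \ {r | τ r ⊆ β} | a ∈ τ r'}.Infinite := by
      by_contra hSfin
      rw [Set.not_infinite] at hSfin
      have hU : (⋃ s ∈ {r' ∈ Set.range d \ {r | τ r ⊆ β} | a ∈ τ r'} \ {d n},
          (τ (d n) ∩ τ s)).Finite := by
        refine Set.Finite.biUnion hSfin.diff ?_
        rintro s ⟨⟨⟨⟨ns, rfl⟩, -⟩, -⟩, hs2⟩
        have hnsn : d ns ≠ d n := fun h => hs2 (by simpa using h)
        exact branch_inter_finite hT (hbr _ (hdR n)) (hbr _ (hdR ns))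
          (hne _ (hdR n) _ (hdR ns) (Ne.symm hnsn))
      obtain ⟨N0, hN0⟩ := hU.bddAbove
      obtain ⟨r', hr'mem, hr'ne, hnsub⟩ := hcon (max a N0)
      obtain ⟨b, hbmem, hbN⟩ := Set.not_subset.1 hnsub
      have hbgt : max a N0 < b := not_le.1 hbN
      have haltb : a < b := lt_of_le_of_lt (le_max_left a N0) hbgt
      have hN0ltb : N0 < b := lt_of_le_of_lt (le_max_right a N0) hbgt
      have hab : le a b := by
        rcases (hbr _ (hdR n)).1 ha hbmem.1 haltb.ne with h | h
        · exact h
        · have := hT.compat h; omega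
      have hr'R : r' ∈ R := by
        obtain ⟨⟨nr, rfl⟩, -⟩ := hr'mem
        exact hdR nr
      have har' : a ∈ τ r' := branch_mem_of_le hT (hbr r' hr'R) hbmem.2 hab
      have hbU : b ∈ ⋃ s ∈ {r' ∈ Set.range d \ {r | τ r ⊆ β} | a ∈ τ r'} \ {d n},
          (τ (d n) ∩ τ s) := by
        exact Set.mem_biUnion (⟨⟨hr'mem, har'⟩, hr'ne⟩ :
          r' ∈ {r' ∈ Set.range d \ {r | τ r ⊆ β} | a ∈ τ r'} \ {d n}) hbmem
      have := hN0 hbU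
      omega
    have hSsub : {r' ∈ Set.range d \ {r | τ r ⊆ β} | a ∈ τ r'} ⊆ Set.range d :=
      fun r' hr' => hr'.1.1
    obtain ⟨nn, hnn, hgt⟩ := (hSinf.preimage hSsub).exists_gt a
    have hfmem : d nn ∈ f (a+1) := hmono (show a + 1 ≤ nn by omega) (hdmem nn)
    exact (hβ a (d nn) hfmem).1 hnn.2

/-- Iterated extraction over finitely many branch indices. -/
lemma branch_extract_multi (hT : IsJTTree le) (σ : ℕ → ℕ → Set ℕ) (K : ℕ) (R : Set ℕ)
    (hR : R.Infinite)
    (hbr : ∀ r ∈ R, ∀ k < K, IsBranch le (σ r k))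
    (hne : ∀ r ∈ R, ∀ r' ∈ R, r ≠ r' → ∀ k < K, σ r k ≠ σ r' k) :
    ∃ R', R' ⊆ R ∧ R'.Infinite ∧
      ∀ k < K, ∀ r ∈ R', ∃ N, ∀ r' ∈ R', r' ≠ r → σ r k ∩ σ r' k ⊆ Set.Iic N := by
  induction K generalizing R with
  | zero => exact ⟨R, Set.Subset.rfl, hR, fun k hk => absurd hk (Nat.not_lt_zero k)⟩
  | succ K ih =>
    obtain ⟨R₁, hR₁R, hR₁inf, hR₁⟩ := ih R hR
      (fun r hr k hk => hbr r hr k (hk.trans (Nat.lt_succ_self K)))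
      (fun r hr r' hr' h k hk => hne r hr r' hr' h k (hk.trans (Nat.lt_succ_self K)))
    obtain ⟨R', hR'R₁, hR'inf, hR'⟩ := branch_extract hT (fun r => σ r K) R₁ hR₁inf
      (fun r hr => hbr r (hR₁R hr) K (Nat.lt_succ_self K))
      (fun r hr r' hr' h => hne r (hR₁R hr) r' (hR₁R hr') h K (Nat.lt_succ_self K))
    refine ⟨R', hR'R₁.trans hR₁R, hR'inf, ?_⟩
    intro k hk r hr
    rcases Nat.lt_succ_iff_lt_or_eq.1 hk with hk' | rfl
    · obtain ⟨N, hN⟩ := hR₁ k hk' r (hR'R₁ hr)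
      exact ⟨N, fun r' hr' hne' => hN r' (hR'R₁ hr') hne'⟩
    · exact hR' r hr

end AuxJT

theorem stmt15 (le : ℕ → ℕ → Prop) (hT : IsJTTree le)
    (κ : ℕ → ℕ) (hκ : StrictMono κ)
    (σ : ℕ → ℕ → Set ℕ)
    (hbr : ∀ n, ∀ i < κ n, IsBranch le (σ n i))
    (hinj : ∀ n, ∀ i < κ n, ∀ j < κ n, i ≠ j → σ n i ≠ σ n j)
    (hdisj : ∀ n m, n ≠ m → ∀ i < κ n, ∀ j < κ m, σ n i ≠ σ m j) :
    ∃ M : Set ℕ, M.Infinite ∧ ∃ l : ℕ → ℕ,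
      ∀ m ∈ M, ∀ m₁ ∈ M, ∀ m₂ ∈ M, m < m₁ → m₁ < m₂ →
        ∀ k < κ m, IncompFinal le (finalSeg (σ m₁ k) (l m₁)) (finalSeg (σ m₂ k) (l m₂)) := by
  classical
  set P : ℕ → Set ℕ → Prop := fun K R => R.Infinite ∧ (∀ r ∈ R, K ≤ κ r) ∧
    ∀ k < K, ∀ r ∈ R, ∃ N, ∀ r' ∈ R, r' ≠ r → σ r k ∩ σ r' k ⊆ Set.Iic N with hP
  have step : ∀ (i : ℕ) (p : ℕ × Set ℕ), P p.1 p.2 → ∃ q : ℕ × Set ℕ,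
      P q.1 q.2 ∧ (q.2 ⊆ p.2 ∧ ∀ r ∈ q.2, sInf p.2 < r) ∧ q.1 = κ (sInf p.2) := by
    rintro _ ⟨K, R⟩ ⟨hRinf, hRκ, hRb⟩
    have hR2 : (R \ Set.Iic (sInf R)).Infinite := hRinf.diff (Set.finite_Iic _)
    have hgt : ∀ r ∈ R \ Set.Iic (sInf R), sInf R < r := fun r hr => not_le.1 hr.2
    obtain ⟨R', hsub, hinf, hb⟩ := branch_extract_multi hT σ (κ (sInf R))
      (R \ Set.Iic (sInf R)) hR2
      (fun r hr k hk => hbr r k (hk.trans (hκ (hgt r hr))))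
      (fun r hr r' hr' h k hk => hdisj r r' h k (hk.trans (hκ (hgt r hr)))
        k (hk.trans (hκ (hgt r' hr'))))
    exact ⟨(κ (sInf R), R'),
      ⟨hinf, fun r hr => (hκ (hgt r (hsub hr))).le, hb⟩,
      ⟨hsub.trans Set.diff_subset, fun r hr => hgt r (hsub hr)⟩, rfl⟩
  have P0 : P (0, (Set.univ : Set ℕ)).1 (0, (Set.univ : Set ℕ)).2 :=
    ⟨Set.infinite_univ, fun r _ => Nat.zero_le _, fun k hk => absurd hk (Nat.not_lt_zero _)⟩
  obtain ⟨g, hg0, hgQ, hgSt⟩ := exists_nat_seq' (fun _ p => P p.1 p.2)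
    (fun p q => (q.2 ⊆ p.2 ∧ ∀ r ∈ q.2, sInf p.2 < r) ∧ q.1 = κ (sInf p.2))
    (0, Set.univ) P0 step
  set T : ℕ → Set ℕ := fun i => (g i).2 with hTdef
  set Kf : ℕ → ℕ := fun i => (g i).1 with hKdef
  set mm : ℕ → ℕ := fun i => sInf (T i) with hmmdef
  have hTinf : ∀ i, (T i).Infinite := fun i => (hgQ i).1
  have hmm_mem : ∀ i, mm i ∈ T i := fun i => Nat.sInf_mem (hTinf i).nonempty
  have hTsub : ∀ i, T (i+1) ⊆ T i := fun i => (hgSt i).1.1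
  have hTgt : ∀ i, ∀ r ∈ T (i+1), mm i < r := fun i => (hgSt i).1.2
  have hKs : ∀ i, Kf (i+1) = κ (mm i) := fun i => (hgSt i).2
  have hmm_lt : ∀ i, mm i < mm (i+1) := fun i => hTgt i _ (hmm_mem (i+1))
  have hmmmono : StrictMono mm := strictMono_nat_of_lt_succ hmm_lt
  have hTanti : Antitone T := antitone_nat_of_succ_le hTsub
  have hNex : ∀ i k, k < Kf i → ∃ N, ∀ r' ∈ T i, r' ≠ mm i → σ (mm i) k ∩ σ r' k ⊆ Set.Iic N :=
    fun i k hk => (hgQ i).2.2 k hk (mm i) (hmm_mem i)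
  choose! N hN using hNex
  have hMex : ∀ i j k, i ≠ j → k < κ (mm i) → k < κ (mm j) →
      ∃ Nb, σ (mm i) k ∩ σ (mm j) k ⊆ Set.Iic Nb := by
    intro i j k hij h1 h2
    have hmne : mm i ≠ mm j := fun h => hij (hmmmono.injective h)
    have hfin := branch_inter_finite hT (hbr _ _ h1) (hbr _ _ h2)
      (hdisj _ _ hmne _ h1 _ h2)
    obtain ⟨Nb, hNb⟩ := hfin.bddAbove
    exact ⟨Nb, fun x hx => hNb hx⟩
  choose! Mb hMb using hMex
  set l' : ℕ → ℕ := fun i => max ((Finset.range (Kf i)).sup fun k => N i k)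
    ((Finset.range i).sup fun j => (Finset.range (κ (mm j))).sup fun k => Mb i j k) with hl'def
  set l : ℕ → ℕ := Function.extend mm l' (fun _ => 0) with hldef
  have hlmm : ∀ i, l (mm i) = l' i := fun i => hmmmono.injective.extend_apply l' _ i
  refine ⟨Set.range mm, Set.infinite_range_of_injective hmmmono.injective, l, ?_⟩
  rintro _ ⟨j₀, rfl⟩ _ ⟨j₁, rfl⟩ _ ⟨j₂, rfl⟩ h01 h12 k hk
  have hj01 : j₀ < j₁ := hmmmono.lt_iff_lt.1 h01
  have hj12 : j₁ < j₂ := hmmmono.lt_iff_lt.1 h12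
  have hk1 : k < κ (mm j₁) := lt_of_lt_of_le hk (hκ h01).le
  have hk2 : k < κ (mm j₂) := lt_of_lt_of_le hk (hκ (h01.trans h12)).le
  have hbr1 := hbr (mm j₁) k hk1
  have hbr2 := hbr (mm j₂) k hk2
  obtain ⟨j₁', rfl⟩ : ∃ a, a + 1 = j₁ := ⟨j₁ - 1, by omega⟩
  have hkK1 : k < Kf (j₁' + 1) := by
    rw [hKs j₁']
    exact lt_of_lt_of_le hk (hκ.monotone (hmmmono.monotone (by omega)))
  have hmem2 : mm j₂ ∈ T (j₁' + 1) := hTanti hj12.le (hmm_mem j₂)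
  have hne21 : mm j₂ ≠ mm (j₁' + 1) := (hmmmono hj12).ne'
  have hIA : σ (mm (j₁' + 1)) k ∩ σ (mm j₂) k ⊆ Set.Iic (N (j₁' + 1) k) :=
    hN (j₁' + 1) k hkK1 (mm j₂) hmem2 hne21
  have hNle : N (j₁' + 1) k ≤ l' (j₁' + 1) :=
    le_trans (Finset.le_sup (Finset.mem_range.2 hkK1)) (le_max_left _ _)
  have hIB : σ (mm j₂) k ∩ σ (mm (j₁' + 1)) k ⊆ Set.Iic (Mb j₂ (j₁' + 1) k) :=
    hMb j₂ (j₁' + 1) k hj12.ne' hk2 hk1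
  have hMble : Mb j₂ (j₁' + 1) k ≤ l' j₂ := by
    refine le_trans (le_trans (Finset.le_sup (Finset.mem_range.2 hk1))
      (Finset.le_sup (f := fun j => (Finset.range (κ (mm j))).sup fun k => Mb j₂ j k)
        (Finset.mem_range.2 hj12))) (le_max_right _ _)
  have hA : (finalSeg (σ (mm (j₁' + 1)) k) (l (mm (j₁' + 1)))).Nonempty := by
    obtain ⟨x, hx, hgtx⟩ := (branch_infinite hT hbr1).exists_gt (l (mm (j₁' + 1)))
    exact ⟨x, hx, hgtx⟩
  have hB : (finalSeg (σ (mm j₂) k) (l (mm j₂))).Nonempty := by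
    obtain ⟨x, hx, hgtx⟩ := (branch_infinite hT hbr2).exists_gt (l (mm j₂))
    exact ⟨x, hx, hgtx⟩
  have haA := Nat.sInf_mem hA
  have hbB := Nat.sInf_mem hB
  refine ⟨hA, hB, ?_, ?_⟩
  · intro hle
    have hamem : sInf (finalSeg (σ (mm (j₁' + 1)) k) (l (mm (j₁' + 1)))) ∈ σ (mm j₂) k :=
      branch_mem_of_le hT hbr2 hbB.1 hle
    have h1 : sInf (finalSeg (σ (mm (j₁' + 1)) k) (l (mm (j₁' + 1)))) ≤ N (j₁' + 1) k :=
      hIA ⟨haA.1, hamem⟩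
    have hNle' : N (j₁' + 1) k ≤ l (mm (j₁' + 1)) := by rw [hlmm]; exact hNle
    have h2 := haA.2
    omega
  · intro hle
    have hbmem : sInf (finalSeg (σ (mm j₂) k) (l (mm j₂))) ∈ σ (mm (j₁' + 1)) k :=
      branch_mem_of_le hT hbr1 haA.1 hle
    have h1 : sInf (finalSeg (σ (mm j₂) k) (l (mm j₂))) ≤ Mb j₂ (j₁' + 1) k :=
      hIB ⟨hbB.1, hbmem⟩
    have hMble' : Mb j₂ (j₁' + 1) k ≤ l (mm j₂) := by rw [hlmm]; exact hMble
    have h2 := hbB.2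
    omega
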